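/- arXiv:1310.5192 — 7 statements merged into one kernel-verified Lean document; each statement's English description precedes it below -/
import Mathlib

section
/- Suppose a₁ > 0 and a₂ < 0. Then every solution u of the mean-field best-response ODE with u(t) ∈ [0,1] for all t ≥ 0 satisfies u(t) → 1 as t → ∞. -/
/-- Mean-field best-response ODE: if strategy 1 is selfish (`a₁ > 0`) and strategy 2 is
altruistic (`a₂ < 0`), then every solution taking values in `[0,1]` converges to `1`. -/
theorem meanfield_selfish_altruistic_wins (a₁ a₂ : ℝ) (ha₁ : 0 < a₁) (ha₂ : a₂ < 0)
    (u : ℝ → ℝ)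
    (hrange : ∀ t : ℝ, 0 ≤ t → u t ∈ Set.Icc (0 : ℝ) 1)
    (hode : ∀ t : ℝ, 0 ≤ t →
      HasDerivAt u
        ((1 - u t) * (if a₁ * u t > a₂ * (1 - u t) then (1 : ℝ) else 0)
          - u t * (if a₁ * u t < a₂ * (1 - u t) then (1 : ℝ) else 0)) t) :
    Filter.Tendsto u Filter.atTop (nhds 1) := by
  -- On [0,∞) the ODE is u' = 1 - u.
  have hode' : ∀ t : ℝ, 0 ≤ t → HasDerivAt u (1 - u t) t := by
    intro t ht
    have hu := hrange t ht
    have hgt : a₁ * u t > a₂ * (1 - u t) := by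
      rcases lt_or_eq_of_le hu.1 with h | h
      · have h1 : 0 < a₁ * u t := mul_pos ha₁ h
        have h2 : a₂ * (1 - u t) ≤ 0 :=
          mul_nonpos_of_nonpos_of_nonneg ha₂.le (by linarith [hu.2])
        linarith
      · have : a₂ * (1 - u t) < 0 := by
          rw [← h]; nlinarith
        nlinarith
    have := hode t ht
    simpa [hgt, not_lt_of_gt hgt] using this
  -- (u t - 1) * exp t is constant on [0,∞)
  have key : ∀ t : ℝ, 0 ≤ t → (u t - 1) * Real.exp t = u 0 - 1 := by
    intro t ht
    have hconst := constant_of_has_deriv_right_zero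
      (f := fun s => (u s - 1) * Real.exp s) (a := 0) (b := t)
      (fun x hx => (((hode' x hx.1).sub_const 1).mul (Real.hasDerivAt_exp x)).continuousAt.continuousWithinAt)
      (fun x hx => by
        have h := ((hode' x hx.1).sub_const 1).mul (Real.hasDerivAt_exp x)
        have : (1 - u x) * Real.exp x + (u x - 1) * Real.exp x = 0 := by ring
        rw [this] at h
        exact h.hasDerivWithinAt)
      t (Set.mem_Icc.mpr ⟨ht, le_refl t⟩)
    simpa using hconst
  -- hence u t = 1 + (u 0 - 1) * exp (-t) for t ≥ 0
  have heq : ∀ t : ℝ, 0 ≤ t → u t = 1 + (u 0 - 1) * Real.exp (-t) := by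
    intro t ht
    have h := key t ht
    have hexp : Real.exp t ≠ 0 := Real.exp_ne_zero t
    have : Real.exp (-t) = (Real.exp t)⁻¹ := Real.exp_neg t
    field_simp [this] at *
    linear_combination (Real.exp (-t)) * h - (u t - 1) * this
  have hlim : Filter.Tendsto (fun t : ℝ => 1 + (u 0 - 1) * Real.exp (-t))
      Filter.atTop (nhds 1) := by
    have h1 : Filter.Tendsto (fun t : ℝ => Real.exp (-t)) Filter.atTop (nhds 0) := by
      exact (Real.tendsto_exp_atBot.comp Filter.tendsto_neg_atTop_atBot)
    have := ((h1.const_mul (u 0 - 1)).const_add 1)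
    simpa using this
  refine hlim.congr' ?_
  filter_upwards [Filter.eventually_ge_atTop (0 : ℝ)] with t ht
  exact (heq t ht).symm
end

section
/- Suppose a₁ < 0 and a₂ > 0. Then every solution u of the mean-field best-response ODE with u(t) ∈ [0,1] for all t ≥ 0 satisfies u(t) → 0 as t → ∞. -/
/-- Mean-field best-response ODE: if strategy 1 is altruistic (`a₁ < 0`) and strategy 2 is
selfish (`a₂ > 0`), then every solution taking values in `[0,1]` converges to `0`. -/
theorem meanfield_altruistic_selfish_loses (a₁ a₂ : ℝ) (ha₁ : a₁ < 0) (ha₂ : 0 < a₂)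
    (u : ℝ → ℝ)
    (hrange : ∀ t : ℝ, 0 ≤ t → u t ∈ Set.Icc (0 : ℝ) 1)
    (hode : ∀ t : ℝ, 0 ≤ t →
      HasDerivAt u
        ((1 - u t) * (if a₁ * u t > a₂ * (1 - u t) then (1 : ℝ) else 0)
          - u t * (if a₁ * u t < a₂ * (1 - u t) then (1 : ℝ) else 0)) t) :
    Filter.Tendsto u Filter.atTop (nhds 0) := by
  -- Along [0,∞), the ODE reduces to u' = -u.
  have hlt : ∀ t : ℝ, 0 ≤ t → a₁ * u t < a₂ * (1 - u t) := by
    intro t ht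
    obtain ⟨h0, h1⟩ := hrange t ht
    rcases lt_or_eq_of_le h1 with h | h
    · have hL : a₁ * u t ≤ 0 := mul_nonpos_of_nonpos_of_nonneg ha₁.le h0
      have hR : 0 < a₂ * (1 - u t) := mul_pos ha₂ (by linarith)
      linarith
    · rw [h]; simp; linarith
  have hode' : ∀ t : ℝ, 0 ≤ t → HasDerivAt u (-u t) t := by
    intro t ht
    have := hode t ht
    rw [if_pos (hlt t ht), if_neg (by
      have := hlt t ht; exact not_lt.mpr this.le)] at this
    simpa using this
  -- g t = u t * exp t has zero derivative on [0,∞).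
  set g : ℝ → ℝ := fun t => u t * Real.exp t with hg
  have hgd : ∀ t : ℝ, 0 ≤ t → HasDerivAt g 0 t := by
    intro t ht
    have h := (hode' t ht).mul (Real.hasDerivAt_exp t)
    rw [show -u t * Real.exp t + u t * Real.exp t = 0 by ring] at h
    exact h
  have hconst : ∀ t : ℝ, 0 ≤ t → g t = g 0 := by
    intro t ht
    have := constant_of_has_deriv_right_zero (f := g) (a := 0) (b := t)
      (fun x hx => ((hgd x hx.1).continuousAt).continuousWithinAt)
      (fun x hx => ((hgd x hx.1).hasDerivWithinAt))
    exact this t ⟨ht, le_rfl⟩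
  have hu : ∀ t : ℝ, 0 ≤ t → u t = u 0 * Real.exp (-t) := by
    intro t ht
    have h := hconst t ht
    have : u t * Real.exp t = u 0 := by simpa [hg] using h
    have hexp := Real.exp_pos t
    field_simp [Real.exp_neg]
    rw [Real.exp_neg, ← this]; field_simp
  have hlim : Filter.Tendsto (fun t => u 0 * Real.exp (-t)) Filter.atTop (nhds 0) := by
    have := Real.tendsto_exp_neg_atTop_nhds_zero
    simpa using (this.const_mul (u 0))
  refine hlim.congr' ?_
  filter_upwards [Filter.eventually_ge_atTop (0 : ℝ)] with t ht
  exact (hu t ht).symm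
end

section
/- Suppose a₁ < 0 and a₂ < 0, and set u* := a₂/(a₁ + a₂). Then u* ∈ (0,1), and every solution u of the mean-field best-response ODE with u(t) ∈ [0,1] for all t ≥ 0 satisfies u(t) → u* as t → ∞ (coexistence of the two altruistic strategies in the mean-field model). -/
/-- Mean-field best-response ODE: if both strategies are altruistic (`a₁ < 0` and `a₂ < 0`),
then `u* := a₂ / (a₁ + a₂)` lies in `(0,1)` and every solution taking values in `[0,1]`
converges to `u*` (coexistence). -/
theorem meanfield_altruistic_altruistic_coexistence (a₁ a₂ : ℝ) (ha₁ : a₁ < 0) (ha₂ : a₂ < 0) :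
    a₂ / (a₁ + a₂) ∈ Set.Ioo (0 : ℝ) 1 ∧
    ∀ u : ℝ → ℝ,
      (∀ t : ℝ, 0 ≤ t → u t ∈ Set.Icc (0 : ℝ) 1) →
      (∀ t : ℝ, 0 ≤ t →
        HasDerivAt u
          ((1 - u t) * (if a₁ * u t > a₂ * (1 - u t) then (1 : ℝ) else 0)
            - u t * (if a₁ * u t < a₂ * (1 - u t) then (1 : ℝ) else 0)) t) →
      Filter.Tendsto u Filter.atTop (nhds (a₂ / (a₁ + a₂))) := by
  have hsum : a₁ + a₂ < 0 := by linarith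
  set s : ℝ := a₂ / (a₁ + a₂) with hs
  have hs0 : 0 < s := by
    rw [hs, div_pos_iff]; right; exact ⟨ha₂, hsum⟩
  have hs1 : s < 1 := by
    rw [hs, div_lt_iff_of_neg hsum]; linarith
  refine ⟨⟨hs0, hs1⟩, ?_⟩
  intro u hmem hderiv
  set c : ℝ := min s (1 - s) with hc
  have hc0 : 0 < c := lt_min hs0 (by linarith)
  have hcs : c ≤ s := min_le_left _ _
  have hcs' : c ≤ 1 - s := min_le_right _ _
  -- pointwise bound on the "energy" derivative
  have key : ∀ t : ℝ, 0 ≤ t →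
      (u t - s) * ((1 - u t) * (if a₁ * u t > a₂ * (1 - u t) then (1 : ℝ) else 0)
        - u t * (if a₁ * u t < a₂ * (1 - u t) then (1 : ℝ) else 0)) ≤ -c * |u t - s| := by
    intro t ht
    obtain ⟨hx0, hx1⟩ := hmem t ht
    set x : ℝ := u t with hxdef
    have h1 : (a₁ * x > a₂ * (1 - x)) ↔ x < s := by
      rw [hs, lt_div_iff_of_neg hsum]
      constructor <;> intro h <;> nlinarith
    have h2 : (a₁ * x < a₂ * (1 - x)) ↔ s < x := by
      rw [hs, div_lt_iff_of_neg hsum]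
      constructor <;> intro h <;> nlinarith
    rcases lt_trichotomy x s with h | h | h
    · rw [if_pos (h1.mpr h), if_neg (by rw [h2]; exact not_lt.mpr h.le),
        abs_of_neg (by linarith : x - s < 0)]
      nlinarith
    · rw [if_neg (by rw [h1]; exact not_lt.mpr h.ge), if_neg (by rw [h2]; exact not_lt.mpr h.le),
        h, sub_self, abs_zero]
      ring_nf
      simp
    · rw [if_neg (by rw [h1]; exact not_lt.mpr h.le), if_pos (h2.mpr h),
        abs_of_pos (by linarith : 0 < x - s)]
      nlinarith
  -- derivative of the energy
  have hgd : ∀ t : ℝ, 0 ≤ t → HasDerivAt (fun τ => (u τ - s) ^ 2)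
      (2 * ((u t - s) * ((1 - u t) * (if a₁ * u t > a₂ * (1 - u t) then (1 : ℝ) else 0)
        - u t * (if a₁ * u t < a₂ * (1 - u t) then (1 : ℝ) else 0)))) t := by
    intro t ht
    have := ((hderiv t ht).sub_const s).fun_pow 2
    refine this.congr_deriv ?_
    push_cast
    ring
  have gcont : ContinuousOn (fun τ => (u τ - s) ^ 2) (Set.Ici (0 : ℝ)) := fun t ht =>
    (hgd t ht).continuousAt.continuousWithinAt
  have gdiff : DifferentiableOn ℝ (fun τ => (u τ - s) ^ 2) (interior (Set.Ici (0 : ℝ))) := by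
    rw [interior_Ici]
    exact fun t ht => ((hgd t (le_of_lt ht)).differentiableAt).differentiableWithinAt
  have ganti : AntitoneOn (fun τ => (u τ - s) ^ 2) (Set.Ici (0 : ℝ)) := by
    apply antitoneOn_of_deriv_nonpos (convex_Ici 0) gcont gdiff
    intro t ht
    rw [interior_Ici] at ht
    have ht0 : (0 : ℝ) ≤ t := le_of_lt ht
    rw [(hgd t ht0).deriv]
    have := key t ht0
    have habs : (0 : ℝ) ≤ |u t - s| := abs_nonneg _
    nlinarith
  -- main claim: eventually the energy is small
  have claim : ∀ ε : ℝ, 0 < ε → ∃ T : ℝ, 0 ≤ T ∧ (u T - s) ^ 2 < ε ^ 2 := by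
    intro ε hε
    by_contra hcon
    push_neg at hcon
    have hcon' : ∀ T : ℝ, 0 ≤ T → ε ^ 2 ≤ (u T - s) ^ 2 := fun T hT => hcon T hT
    -- the perturbed energy is antitone
    have hφd : ∀ t : ℝ, 0 ≤ t → HasDerivAt (fun τ => (u τ - s) ^ 2 + 2 * c * ε * τ)
        (2 * ((u t - s) * ((1 - u t) * (if a₁ * u t > a₂ * (1 - u t) then (1 : ℝ) else 0)
          - u t * (if a₁ * u t < a₂ * (1 - u t) then (1 : ℝ) else 0))) + 2 * c * ε) t := by
      intro t ht
      have h2 : HasDerivAt (fun τ : ℝ => 2 * c * ε * τ) (2 * c * ε) t := by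
        simpa using (hasDerivAt_id t).const_mul (2 * c * ε)
      exact (hgd t ht).add h2
    have φanti : AntitoneOn (fun τ => (u τ - s) ^ 2 + 2 * c * ε * τ) (Set.Ici (0 : ℝ)) := by
      apply antitoneOn_of_deriv_nonpos (convex_Ici 0)
      · exact fun t ht => (hφd t ht).continuousAt.continuousWithinAt
      · rw [interior_Ici]
        exact fun t ht => ((hφd t (le_of_lt ht)).differentiableAt).differentiableWithinAt
      · intro t ht
        rw [interior_Ici] at ht
        have ht0 : (0 : ℝ) ≤ t := le_of_lt ht
        rw [(hφd t ht0).deriv]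
        have h1 := key t ht0
        have h2 := hcon' t ht0
        have habs : ε ≤ |u t - s| := by
          rcases abs_cases (u t - s) with ⟨he, _⟩ | ⟨he, _⟩ <;> nlinarith
        nlinarith
    -- evaluate at a large time
    set T : ℝ := ((u 0 - s) ^ 2 + 1) / (2 * c * ε) with hT
    have hden : 0 < 2 * c * ε := by positivity
    have hT0 : 0 ≤ T := by positivity
    have := φanti (Set.self_mem_Ici) (Set.mem_Ici.mpr hT0) hT0
    have hTval : 2 * c * ε * T = (u 0 - s) ^ 2 + 1 := by
      rw [hT]; field_simp
    have hsq : (0 : ℝ) ≤ (u T - s) ^ 2 := sq_nonneg _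
    simp only at this
    nlinarith
  -- conclude convergence
  rw [Metric.tendsto_atTop]
  intro ε hε
  obtain ⟨T, hT0, hT⟩ := claim ε hε
  refine ⟨T, fun t ht => ?_⟩
  have ht0 : (0 : ℝ) ≤ t := le_trans hT0 ht
  have := ganti (Set.mem_Ici.mpr hT0) (Set.mem_Ici.mpr ht0) ht
  simp only at this
  rw [Real.dist_eq]
  rcases abs_cases (u t - s) with ⟨he, _⟩ | ⟨he, _⟩ <;> nlinarith
end

section
/- Suppose a₁ > 0 and a₂ > 0, and set u* := a₂/(a₁ + a₂). Then every solution u of the mean-field best-response ODE with u(t) ∈ [0,1] for all t ≥ 0 and initial condition u(0) > u* satisfies u(t) → 1 as t → ∞ (one half of the bistability of the mean-field model with two selfish strategies). -/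
/-- Mean-field best-response ODE: if both strategies are selfish (`a₁ > 0` and `a₂ > 0`),
then every solution taking values in `[0,1]` with initial condition above
`u* := a₂ / (a₁ + a₂)` converges to `1` (one half of bistability). -/
theorem meanfield_selfish_selfish_bistable_up (a₁ a₂ : ℝ) (ha₁ : 0 < a₁) (ha₂ : 0 < a₂)
    (u : ℝ → ℝ)
    (hrange : ∀ t : ℝ, 0 ≤ t → u t ∈ Set.Icc (0 : ℝ) 1)
    (hode : ∀ t : ℝ, 0 ≤ t →
      HasDerivAt u
        ((1 - u t) * (if a₁ * u t > a₂ * (1 - u t) then (1 : ℝ) else 0)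
          - u t * (if a₁ * u t < a₂ * (1 - u t) then (1 : ℝ) else 0)) t)
    (h0 : u 0 > a₂ / (a₁ + a₂)) :
    Filter.Tendsto u Filter.atTop (nhds 1) := by
  set c := a₂ / (a₁ + a₂) with hc
  have hab : 0 < a₁ + a₂ := by linarith
  have hclt1 : c < 1 := by rw [hc, div_lt_one hab]; linarith
  have hc0 : 0 < c := div_pos ha₂ hab
  -- derivative simplification above the threshold
  have hderiv : ∀ t, 0 ≤ t → c < u t → HasDerivAt u (1 - u t) t := by
    intro t ht hgt
    have hut : a₂ < u t * (a₁ + a₂) := by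
      have := (div_lt_iff₀ hab).mp hgt
      linarith
    have h1 : a₂ * (1 - u t) < a₁ * u t := by nlinarith
    have h2 : ¬ (a₁ * u t < a₂ * (1 - u t)) := by linarith
    have heq : ((1 - u t) * (if a₁ * u t > a₂ * (1 - u t) then (1 : ℝ) else 0)
        - u t * (if a₁ * u t < a₂ * (1 - u t) then (1 : ℝ) else 0)) = 1 - u t := by
      rw [if_pos h1, if_neg h2]; ring
    have := hode t ht
    rwa [heq] at this
  have hg : ∀ t, 0 ≤ t → c < u t →
      HasDerivAt (fun t => (1 - u t) * Real.exp t) 0 t := by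
    intro t ht hgt
    have h1 := hderiv t ht hgt
    have h2 : HasDerivAt (fun t => 1 - u t) (-(1 - u t)) t := by
      exact h1.const_sub 1
    have h3 : HasDerivAt (fun t => (1 - u t) * Real.exp t) _ t := h2.mul (Real.hasDerivAt_exp t)
    convert h3 using 1
    ring
  have hconst : ∀ s, 0 ≤ s → (∀ t, 0 ≤ t → t < s → c < u t) →
      ∀ x ∈ Set.Icc (0 : ℝ) s, (1 - u x) * Real.exp x = 1 - u 0 := by
    intro s hs hall x hx
    have := constant_of_has_deriv_right_zero
      (f := fun t => (1 - u t) * Real.exp t) (a := 0) (b := s)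
      (fun y hy => ((continuousAt_const.sub (hode y hy.1).continuousAt).mul
        Real.continuous_exp.continuousAt).continuousWithinAt)
      (fun y hy => (hg y hy.1 (hall y hy.1 hy.2)).hasDerivWithinAt) x hx
    simpa [Real.exp_zero] using this
  -- invariance: u stays above c
  have hgt : ∀ t, 0 ≤ t → c < u t := by
    by_contra h
    push_neg at h
    obtain ⟨t0, ht0, hle⟩ := h
    set S := {t : ℝ | 0 ≤ t ∧ u t ≤ c} with hS
    have hSne : S.Nonempty := ⟨t0, ht0, hle⟩
    have hSbdd : BddBelow S := ⟨0, fun x hx => hx.1⟩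
    set s := sInf S with hsdef
    have hs0 : 0 ≤ s := le_csInf hSne fun x hx => hx.1
    have hall : ∀ t, 0 ≤ t → t < s → c < u t := by
      intro t ht hts
      by_contra htc
      push_neg at htc
      exact absurd (csInf_le hSbdd ⟨ht, htc⟩) (not_le.mpr hts)
    have hus : u s ≤ c := by
      by_contra husc
      push_neg at husc
      have hcont : ContinuousAt u s := (hode s hs0).continuousAt
      have hev : ∀ᶠ x in nhds s, c < u x := hcont.eventually (eventually_gt_nhds husc)
      rw [Metric.eventually_nhds_iff] at hev
      obtain ⟨δ, hδ, hball⟩ := hev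
      obtain ⟨x, hxS, hxlt⟩ := exists_lt_of_csInf_lt hSne (by linarith : sInf S < s + δ)
      have hxs : s ≤ x := csInf_le hSbdd hxS
      have : c < u x := hball (by rw [Real.dist_eq]; rw [abs_lt]; constructor <;> linarith)
      exact absurd hxS.2 (not_le.mpr this)
    have hgs := hconst s hs0 hall s ⟨hs0, le_refl s⟩
    have he1 : 1 ≤ Real.exp s := Real.one_le_exp hs0
    have hu1 : 1 - u s ≥ 0 := by linarith [hclt1]
    nlinarith [hgs]
  -- explicit formula
  have hform : ∀ t, 0 ≤ t → u t = 1 - (1 - u 0) * Real.exp (-t) := by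
    intro t ht
    have := hconst t ht (fun x hx _ => hgt x hx) t ⟨ht, le_refl t⟩
    have he : Real.exp t > 0 := Real.exp_pos t
    rw [Real.exp_neg]
    field_simp
    linarith [this]
  have hlim : Filter.Tendsto (fun t => 1 - (1 - u 0) * Real.exp (-t))
      Filter.atTop (nhds 1) := by
    have h1 : Filter.Tendsto (fun t : ℝ => Real.exp (-t)) Filter.atTop (nhds 0) :=
      Real.tendsto_exp_neg_atTop_nhds_zero
    have h2 := h1.const_mul (1 - u 0)
    have h3 := (tendsto_const_nhds (x := (1 : ℝ)) (f := Filter.atTop)).sub h2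
    simpa using h3
  refine hlim.congr' ?_
  filter_upwards [Filter.eventually_ge_atTop (0 : ℝ)] with t ht
  exact (hform t ht).symm
end

section
/- Suppose a₁ > 0 and a₂ > 0, and set u* := a₂/(a₁ + a₂). Then every solution u of the mean-field best-response ODE with u(t) ∈ [0,1] for all t ≥ 0 and initial condition u(0) < u* satisfies u(t) → 0 as t → ∞ (the other half of the bistability of the mean-field model with two selfish strategies). -/
/-- Mean-field best-response ODE: if both strategies are selfish (`a₁ > 0` and `a₂ > 0`),
then every solution taking values in `[0,1]` with initial condition below
`u* := a₂ / (a₁ + a₂)` converges to `0` (the other half of bistability). -/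
theorem meanfield_selfish_selfish_bistable_down (a₁ a₂ : ℝ) (ha₁ : 0 < a₁) (ha₂ : 0 < a₂)
    (u : ℝ → ℝ)
    (hrange : ∀ t : ℝ, 0 ≤ t → u t ∈ Set.Icc (0 : ℝ) 1)
    (hode : ∀ t : ℝ, 0 ≤ t →
      HasDerivAt u
        ((1 - u t) * (if a₁ * u t > a₂ * (1 - u t) then (1 : ℝ) else 0)
          - u t * (if a₁ * u t < a₂ * (1 - u t) then (1 : ℝ) else 0)) t)
    (h0 : u 0 < a₂ / (a₁ + a₂)) :
    Filter.Tendsto u Filter.atTop (nhds 0) := by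
  have hsum : (0:ℝ) < a₁ + a₂ := by linarith
  set c := u 0 with hc
  set ustar := a₂ / (a₁ + a₂) with hustar
  have hc0 : 0 ≤ c := (hrange 0 le_rfl).1
  have hderiv : ∀ s, 0 ≤ s → u s < ustar → HasDerivAt u (-(u s)) s := by
    intro s hs hlt
    have h1 : a₁ * u s < a₂ * (1 - u s) := by
      have := (lt_div_iff₀ hsum).mp hlt
      nlinarith
    have h2 : ¬ (a₁ * u s > a₂ * (1 - u s)) := not_lt.mpr h1.le
    have := hode s hs
    rw [if_neg h2, if_pos h1] at this
    simpa using this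
  have key : ∀ t, 0 ≤ t → u t = c * Real.exp (-t) := by
    by_contra hcon
    push_neg at hcon
    obtain ⟨t₀, ht₀, hne⟩ := hcon
    set C := {t : ℝ | 0 ≤ t ∧ u t ≠ c * Real.exp (-t)} with hCdef
    have hCne : C.Nonempty := ⟨t₀, ht₀, hne⟩
    have hCbdd : BddBelow C := ⟨0, fun x hx => hx.1⟩
    set T := sInf C with hTdef
    have hT0 : 0 ≤ T := le_csInf hCne fun x hx => hx.1
    have hbefore : ∀ s, 0 ≤ s → s < T → u s = c * Real.exp (-s) := by
      intro s hs hsT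
      by_contra h
      exact absurd (csInf_le hCbdd ⟨hs, h⟩) (not_le.mpr hsT)
    have hcontu : ∀ s, 0 ≤ s → ContinuousAt u s := fun s hs => (hode s hs).continuousAt
    have hTval : u T = c * Real.exp (-T) := by
      rcases eq_or_lt_of_le hT0 with h0T | h0T
      · rw [← h0T]; simp [hc]
      · have h1 : Filter.Tendsto u (nhdsWithin T (Set.Iio T)) (nhds (u T)) :=
          (hcontu T hT0).continuousWithinAt
        have h2 : Filter.Tendsto (fun s => c * Real.exp (-s)) (nhdsWithin T (Set.Iio T))
            (nhds (c * Real.exp (-T))) := by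
          apply Continuous.continuousWithinAt
          exact (continuous_const.mul (Real.continuous_exp.comp continuous_neg))
        have hmem : Set.Ico 0 T ∈ nhdsWithin T (Set.Iio T) :=
          Ico_mem_nhdsLT_of_mem ⟨h0T, le_rfl⟩
        have h3 : Filter.Tendsto u (nhdsWithin T (Set.Iio T))
            (nhds (c * Real.exp (-T))) := by
          apply h2.congr'
          filter_upwards [hmem] with s hs
          exact (hbefore s hs.1 hs.2).symm
        exact tendsto_nhds_unique h1 h3
    have hTlt : u T < ustar := by
      have : c * Real.exp (-T) ≤ c := by
        nlinarith [Real.exp_le_one_iff.mpr (neg_nonpos.mpr hT0), Real.exp_pos (-T)]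
      calc u T ≤ c := by rw [hTval]; exact this
        _ < ustar := h0
    -- find ε > 0 with u s < ustar on [T, T+ε]
    have hev : ∀ᶠ s in nhds T, u s < ustar := by
      have := (hcontu T hT0).eventually_lt_const hTlt
      exact this
    obtain ⟨δ, hδ, hball⟩ := Metric.eventually_nhds_iff.mp hev
    set ε := δ / 2 with hε
    have hεpos : 0 < ε := by positivity
    have hlt' : ∀ s ∈ Set.Icc T (T + ε), u s < ustar := by
      intro s hs
      apply hball
      rw [Real.dist_eq, abs_sub_lt_iff]
      constructor <;> [linarith [hs.2]; linarith [hs.1]]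
    -- v = u * exp is constant on [T, T+ε]
    set v := fun s => u s * Real.exp s with hv
    have hvd : ∀ x ∈ Set.Ico T (T + ε), HasDerivWithinAt v 0 (Set.Ici x) x := by
      intro x hx
      have hx0 : 0 ≤ x := le_trans hT0 hx.1
      have hd : HasDerivAt v (-(u x) * Real.exp x + u x * Real.exp x) x :=
        (hderiv x hx0 (hlt' x ⟨hx.1, hx.2.le⟩)).mul (Real.hasDerivAt_exp x)
      have : HasDerivAt v 0 x := by
        convert hd using 1; ring
      exact this.hasDerivWithinAt
    have hvc : ContinuousOn v (Set.Icc T (T + ε)) := by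
      intro x hx
      have hx0 : 0 ≤ x := le_trans hT0 hx.1
      exact (((hcontu x hx0).mul (Real.continuous_exp.continuousAt))).continuousWithinAt
    have hconst := constant_of_has_deriv_right_zero hvc hvd
    have hon : ∀ s ∈ Set.Icc T (T + ε), u s = c * Real.exp (-s) := by
      intro s hs
      have h1 : u s * Real.exp s = u T * Real.exp T := hconst s hs
      have h2 : u T * Real.exp T = c := by
        rw [hTval, Real.exp_neg]
        field_simp
      have h3 : u s * Real.exp s = c := by rw [h1, h2]
      rw [Real.exp_neg]
      field_simp [← h3]
      exact h3
    have hfinal : T + ε ≤ T := by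
      rw [hTdef]
      apply le_csInf hCne
      intro x hx
      by_contra hxle
      push_neg at hxle
      have hxT : T ≤ x := csInf_le hCbdd hx
      exact hx.2 (hon x ⟨hxT, hxle.le⟩)
    linarith
  have h1 : Filter.Tendsto (fun t => c * Real.exp (-t)) Filter.atTop (nhds 0) := by
    have := Real.tendsto_exp_neg_atTop_nhds_zero.const_mul c
    simpa using this
  apply h1.congr'
  filter_upwards [Filter.Ici_mem_atTop (0:ℝ)] with t ht
  exact (key t ht).symm
end

section
/- If a configuration η ⊆ ℤ^d is a union of hypercubes, then every site x ∈ η has at least d neighbors in η and at most d neighbors outside η, i.e. N₁(x,η) ≥ d and N₂(x,η) ≤ d. -/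
/-- Two sites of `ℤᵈ` are neighbors iff their `ℓ¹`-distance equals `1`. -/
def Neighbor (d : ℕ) (x y : Fin d → ℤ) : Prop :=
  (∑ i, (x i - y i).natAbs) = 1

/-- Number of neighbors of `x` following strategy 1 (i.e. belonging to `η`). -/
noncomputable def N1 (d : ℕ) (η : Set (Fin d → ℤ)) (x : Fin d → ℤ) : ℕ :=
  Set.ncard {y | Neighbor d x y ∧ y ∈ η}

/-- Number of neighbors of `x` following strategy 2 (i.e. not belonging to `η`). -/
noncomputable def N2 (d : ℕ) (η : Set (Fin d → ℤ)) (x : Fin d → ℤ) : ℕ :=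
  Set.ncard {y | Neighbor d x y ∧ y ∉ η}

/-- The best-response map on configurations. -/
def Phi (d : ℕ) (a₁ a₂ : ℝ) (η : Set (Fin d → ℤ)) : Set (Fin d → ℤ) :=
  {x | a₁ * (N1 d η x : ℝ) > a₂ * (N2 d η x : ℝ) ∨
    (x ∈ η ∧ a₁ * (N1 d η x : ℝ) = a₂ * (N2 d η x : ℝ))}

/-- The hypercube `H_z = 2z + {0,1}^d`. -/
def Hcube (d : ℕ) (z : Fin d → ℤ) : Set (Fin d → ℤ) :=
  {x | ∀ i, x i = 2 * z i ∨ x i = 2 * z i + 1}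

/-- A configuration is a union of hypercubes if it is `⋃_{z ∈ S} H_z` for some `S ⊆ ℤᵈ`. -/
def IsUnionOfHypercubes (d : ℕ) (η : Set (Fin d → ℤ)) : Prop :=
  ∃ S : Set (Fin d → ℤ), η = ⋃ z ∈ S, Hcube d z

/-- In a configuration that is a union of hypercubes, every occupied site has at least
`d` neighbors of type 1 and at most `d` neighbors of type 2. -/
theorem union_of_hypercubes_neighbor_count (d : ℕ) (hd : 1 ≤ d)
    (η : Set (Fin d → ℤ)) (hη : IsUnionOfHypercubes d η) :
    ∀ x ∈ η, d ≤ N1 d η x ∧ N2 d η x ≤ d := by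
  obtain ⟨S, rfl⟩ := hη
  intro x hx
  rw [Set.mem_iUnion₂] at hx
  obtain ⟨z, hzS, hxz⟩ := hx
  have hHsub : Hcube d z ⊆ ⋃ z ∈ S, Hcube d z := Set.subset_iUnion₂_of_subset z hzS le_rfl
  -- finiteness of the neighbor set
  have hNfin : {y : Fin d → ℤ | Neighbor d x y}.Finite := by
    apply Set.Finite.subset (Set.Finite.pi (fun i : Fin d =>
      ((Set.finite_singleton (x i + 1)).insert (x i)).insert (x i - 1)))
    intro y hy
    intro i _
    have h1 : (x i - y i).natAbs ≤ 1 := by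
      have h2 := Finset.single_le_sum (f := fun j => (x j - y j).natAbs)
        (fun j _ => Nat.zero_le _) (Finset.mem_univ i)
      exact le_trans h2 (le_of_eq hy)
    show y i ∈ ({x i - 1, x i, x i + 1} : Set ℤ)
    simp only [Set.mem_insert_iff, Set.mem_singleton_iff]
    omega
  -- structure of neighbors
  have hstruct : ∀ y : Fin d → ℤ, Neighbor d x y →
      ∃ i, (y i = x i + 1 ∨ y i = x i - 1) ∧ ∀ j, j ≠ i → y j = x j := by
    intro y hy
    unfold Neighbor at hy
    have hne : ∃ i, (x i - y i).natAbs ≠ 0 := by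
      by_contra h
      push_neg at h
      rw [Finset.sum_eq_zero (fun j _ => h j)] at hy
      exact one_ne_zero hy.symm
    obtain ⟨i, hi⟩ := hne
    refine ⟨i, ?_, ?_⟩
    · have h1 : (x i - y i).natAbs ≤ 1 := by
        have h2 := Finset.single_le_sum (f := fun j => (x j - y j).natAbs)
          (fun j _ => Nat.zero_le _) (Finset.mem_univ i)
        exact le_trans h2 (le_of_eq hy)
      omega
    · intro j hj
      have h1 : (x i - y i).natAbs = 1 := by
        have h2 := Finset.single_le_sum (f := fun j => (x j - y j).natAbs)
          (fun j _ => Nat.zero_le _) (Finset.mem_univ i)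
        omega
      have hsum : ∑ k ∈ Finset.univ.erase i, (x k - y k).natAbs = 0 := by
        have h2 := Finset.add_sum_erase Finset.univ (fun k => (x k - y k).natAbs)
          (Finset.mem_univ i)
        omega
      have hjz : (x j - y j).natAbs = 0 := by
        have := Finset.sum_eq_zero_iff.mp hsum j (Finset.mem_erase.mpr ⟨hj, Finset.mem_univ j⟩)
        exact this
      omega
  -- the inward flips
  set f : Fin d → (Fin d → ℤ) := fun i => Function.update x i (4 * z i + 1 - x i) with hf
  have hfmem : ∀ i, f i ∈ {y | Neighbor d x y ∧ y ∈ ⋃ z ∈ S, Hcube d z} := by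
    intro i
    constructor
    · unfold Neighbor
      rw [Fintype.sum_eq_single i (fun j hj => by
        simp [hf, Function.update_of_ne hj])]
      simp only [hf, Function.update_self]
      have := hxz i
      omega
    · apply hHsub
      intro j
      by_cases hji : j = i
      · subst hji
        simp only [hf, Function.update_self]
        have := hxz j
        omega
      · simp only [hf, Function.update_of_ne hji]
        exact hxz j
  have hfinj : Function.Injective f := by
    intro i j hij
    by_contra hne
    have h1 : f i i = 4 * z i + 1 - x i := by simp [hf]
    have h2 : f j i = x i := by simp [hf, Function.update_of_ne hne]
    rw [hij] at h1
    rw [h2] at h1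
    have := hxz i
    omega
  constructor
  · -- N1 ≥ d
    have hsub : Set.range f ⊆ {y | Neighbor d x y ∧ y ∈ ⋃ z ∈ S, Hcube d z} := by
      rintro _ ⟨i, rfl⟩; exact hfmem i
    have hfin : {y | Neighbor d x y ∧ y ∈ ⋃ z ∈ S, Hcube d z}.Finite :=
      hNfin.subset (fun y hy => hy.1)
    have hcard : (Set.range f).ncard = d := by
      rw [← Nat.card_coe_set_eq, Nat.card_range_of_injective hfinj, Nat.card_eq_fintype_card,
        Fintype.card_fin]
    calc d = (Set.range f).ncard := hcard.symm
    _ ≤ _ := Set.ncard_le_ncard hsub hfin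
  · -- N2 ≤ d
    set g : Fin d → (Fin d → ℤ) := fun i => Function.update x i (3 * x i - 4 * z i - 1) with hg
    have hsub : {y | Neighbor d x y ∧ y ∉ ⋃ z ∈ S, Hcube d z} ⊆ Set.range g := by
      rintro y ⟨hyN, hyη⟩
      obtain ⟨i, hyi, hyj⟩ := hstruct y hyN
      have hxi := hxz i
      have hcases : (y i = 2 * z i ∨ y i = 2 * z i + 1) ∨ y i = 3 * x i - 4 * z i - 1 := by
        omega
      rcases hcases with hin | hout
      · exfalso
        apply hyη
        apply hHsub
        intro j
        by_cases hji : j = i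
        · subst hji; exact hin
        · rw [hyj j hji]; exact hxz j
      · refine ⟨i, ?_⟩
        funext j
        by_cases hji : j = i
        · subst hji; simp [hg, hout]
        · simp [hg, Function.update_of_ne hji, hyj j hji]
    calc N2 d (⋃ z ∈ S, Hcube d z) x ≤ (Set.range g).ncard := by
          exact Set.ncard_le_ncard hsub (Set.finite_range g)
    _ = (g '' Set.univ).ncard := by rw [Set.image_univ]
    _ ≤ Set.univ.ncard := Set.ncard_image_le Set.finite_univ
    _ = d := by rw [Set.ncard_univ, Nat.card_eq_fintype_card, Fintype.card_fin]
end

section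
/- If a₁ > a₂ > 0 and the configuration η ⊆ ℤ^d is a union of hypercubes, then every x ∈ η satisfies a₁·N₁(x,η) > a₂·N₂(x,η); in particular η ⊆ Φ(η). -/
/-- A neighbor differs from `x` in exactly one coordinate, by `±1`. -/
lemma neighbor_iff (d : ℕ) (x y : Fin d → ℤ) :
    Neighbor d x y ↔ ∃ i, (x i - y i).natAbs = 1 ∧ ∀ j, j ≠ i → y j = x j := by
  constructor
  · intro h
    have h0 : ∃ i ∈ Finset.univ, (x i - y i).natAbs ≠ 0 := by
      apply Finset.exists_ne_zero_of_sum_ne_zero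
      rw [h]; exact one_ne_zero
    obtain ⟨i, -, hi⟩ := h0
    have hsplit : (x i - y i).natAbs + ∑ j ∈ Finset.univ.erase i, (x j - y j).natAbs = 1 := by
      rw [Finset.add_sum_erase Finset.univ (fun j => (x j - y j).natAbs) (Finset.mem_univ i)]
      exact h
    have hi1 : (x i - y i).natAbs = 1 := by omega
    have hrest : ∑ j ∈ Finset.univ.erase i, (x j - y j).natAbs = 0 := by omega
    refine ⟨i, hi1, fun j hj => ?_⟩
    have := (Finset.sum_eq_zero_iff.mp hrest) j (Finset.mem_erase.mpr ⟨hj, Finset.mem_univ j⟩)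
    omega
  · rintro ⟨i, hi, hrest⟩
    unfold Neighbor
    rw [Finset.sum_eq_single i (fun j _ hj => by rw [hrest j hj]; simp) (fun h => absurd (Finset.mem_univ i) h)]
    exact hi

/-- The set of neighbors of a point is finite. -/
lemma neighbor_finite (d : ℕ) (x : Fin d → ℤ) : {y | Neighbor d x y}.Finite := by
  apply Set.Finite.subset (Set.finite_range
    (fun p : Fin d × Bool => Function.update x p.1 (x p.1 + if p.2 then 1 else -1)))
  intro y hy
  obtain ⟨i, hi, hrest⟩ := (neighbor_iff d x y).mp hy
  have hcase : y i = x i + 1 ∨ y i = x i + (-1) := by omega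
  rcases hcase with h | h
  · refine ⟨(i, true), ?_⟩
    funext j
    by_cases hj : j = i
    · subst hj; simp [h]
    · simp [Function.update_of_ne hj, hrest j hj]
  · refine ⟨(i, false), ?_⟩
    funext j
    by_cases hj : j = i
    · subst hj; simp [h]
    · simp [Function.update_of_ne hj, hrest j hj]

/-- For `x ∈ H_z`, the neighbor of `x` in direction `i` which stays inside `H_z`. -/
def innerNbr (d : ℕ) (x z : Fin d → ℤ) (i : Fin d) : Fin d → ℤ :=
  Function.update x i (if x i = 2 * z i then x i + 1 else x i - 1)

lemma innerNbr_neighbor (d : ℕ) (x z : Fin d → ℤ) (i : Fin d) :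
    Neighbor d x (innerNbr d x z i) := by
  rw [neighbor_iff]
  refine ⟨i, ?_, fun j hj => Function.update_of_ne hj _ _⟩
  simp only [innerNbr, Function.update_self]
  split_ifs <;> omega

lemma innerNbr_mem (d : ℕ) (x z : Fin d → ℤ) (i : Fin d) (hxz : x ∈ Hcube d z) :
    innerNbr d x z i ∈ Hcube d z := by
  intro j
  by_cases hj : j = i
  · subst hj
    simp only [innerNbr, Function.update_self]
    split_ifs with h <;> rcases hxz j with h' | h' <;> omega
  · rw [innerNbr, Function.update_of_ne hj]
    exact hxz j

lemma innerNbr_injective (d : ℕ) (x z : Fin d → ℤ) :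
    Function.Injective (innerNbr d x z) := by
  intro i j hij
  by_contra hne
  have h1 := congrFun hij i
  rw [innerNbr, innerNbr, Function.update_self, Function.update_of_ne hne] at h1
  split_ifs at h1 <;> omega

lemma hcube_bounds (d : ℕ) (hd : 1 ≤ d) (η : Set (Fin d → ℤ)) (z x : Fin d → ℤ)
    (hxz : x ∈ Hcube d z) (hsub : Hcube d z ⊆ η) :
    d ≤ N1 d η x ∧ N2 d η x ≤ d := by
  constructor
  · -- N1 ≥ d via the injection innerNbr
    have ht : {y | Neighbor d x y ∧ y ∈ η}.Finite :=
      (neighbor_finite d x).subset (fun y hy => hy.1)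
    have hmaps : ∀ i ∈ (Set.univ : Set (Fin d)),
        innerNbr d x z i ∈ {y | Neighbor d x y ∧ y ∈ η} :=
      fun i _ => ⟨innerNbr_neighbor d x z i, hsub (innerNbr_mem d x z i hxz)⟩
    have := Set.ncard_le_ncard_of_injOn (innerNbr d x z) hmaps
      ((innerNbr_injective d x z).injOn) ht
    simpa [N1, Set.ncard_univ, Nat.card_eq_fintype_card] using this
  · -- N2 ≤ d by injecting into Fin d: per coordinate at most one neighbor is outside η
    have h := Set.ncard_le_ncard_of_injOn
      (s := {y | Neighbor d x y ∧ y ∉ η}) (t := (Set.univ : Set (Fin d)))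
      (fun y : Fin d → ℤ => if h : ∃ i, x i ≠ y i then h.choose else ⟨0, hd⟩)
      (fun y _ => Set.mem_univ _) ?_ Set.finite_univ
    · simpa [N2, Set.ncard_univ, Nat.card_eq_fintype_card] using h
    · intro y1 hy1 y2 hy2 heq
      obtain ⟨i1, h1a, h1b⟩ := (neighbor_iff d x y1).mp hy1.1
      obtain ⟨i2, h2a, h2b⟩ := (neighbor_iff d x y2).mp hy2.1
      have hex1 : ∃ i, x i ≠ y1 i := ⟨i1, fun h => by simp [h] at h1a⟩
      have hex2 : ∃ i, x i ≠ y2 i := ⟨i2, fun h => by simp [h] at h2a⟩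
      have hc1 : hex1.choose = i1 := by
        by_contra hne
        exact hex1.choose_spec (h1b _ hne).symm
      have hc2 : hex2.choose = i2 := by
        by_contra hne
        exact hex2.choose_spec (h2b _ hne).symm
      simp only [dif_pos hex1, dif_pos hex2] at heq
      have hii : i1 = i2 := by rw [← hc1, ← hc2, heq]
      subst hii
      -- the inner neighbor in direction i1 is in η, y1 and y2 are not
      set w := innerNbr d x z i1 with hw
      have hwη : w ∈ η := hsub (innerNbr_mem d x z i1 hxz)
      have hwval : w i1 = x i1 + 1 ∨ w i1 = x i1 - 1 := by
        rw [hw, innerNbr, Function.update_self]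
        split_ifs <;> [left; right] <;> rfl
      have hne1 : y1 i1 ≠ w i1 := by
        intro h
        apply hy1.2
        have : y1 = w := by
          funext j
          by_cases hj : j = i1
          · subst hj; exact h
          · rw [h1b j hj, hw, innerNbr, Function.update_of_ne hj]
        rw [this]; exact hwη
      have hne2 : y2 i1 ≠ w i1 := by
        intro h
        apply hy2.2
        have : y2 = w := by
          funext j
          by_cases hj : j = i1
          · subst hj; exact h
          · rw [h2b j hj, hw, innerNbr, Function.update_of_ne hj]
        rw [this]; exact hwη
      have hval : y1 i1 = y2 i1 := by omega
      funext j
      by_cases hj : j = i1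
      · subst hj; exact hval
      · rw [h1b j hj, h2b j hj]

/-- If `a₁ > a₂ > 0` and `η` is a union of hypercubes, then every occupied site strictly
prefers strategy 1; in particular `η ⊆ Φ(η)`. -/
theorem union_of_hypercubes_subset_Phi (d : ℕ) (hd : 1 ≤ d) (a₁ a₂ : ℝ)
    (ha : a₁ > a₂) (ha₂ : 0 < a₂)
    (η : Set (Fin d → ℤ)) (hη : IsUnionOfHypercubes d η) :
    (∀ x ∈ η, a₁ * (N1 d η x : ℝ) > a₂ * (N2 d η x : ℝ)) ∧ η ⊆ Phi d a₁ a₂ η := by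
  obtain ⟨S, rfl⟩ := hη
  have key : ∀ x ∈ ⋃ z ∈ S, Hcube d z,
      a₁ * (N1 d (⋃ z ∈ S, Hcube d z) x : ℝ) > a₂ * (N2 d (⋃ z ∈ S, Hcube d z) x : ℝ) := by
    intro x hx
    obtain ⟨z, hzS, hxz⟩ := Set.mem_iUnion₂.mp hx
    have hsub : Hcube d z ⊆ ⋃ z ∈ S, Hcube d z := Set.subset_biUnion_of_mem hzS
    obtain ⟨hN1, hN2⟩ := hcube_bounds d hd _ z x hxz hsub
    have h1 : (N2 d (⋃ z ∈ S, Hcube d z) x : ℝ) ≤ (N1 d (⋃ z ∈ S, Hcube d z) x : ℝ) := by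
      exact_mod_cast le_trans hN2 hN1
    have h2 : (0 : ℝ) < (N1 d (⋃ z ∈ S, Hcube d z) x : ℝ) := by
      have : 1 ≤ N1 d (⋃ z ∈ S, Hcube d z) x := le_trans hd hN1
      exact_mod_cast Nat.lt_of_lt_of_le Nat.zero_lt_one this
    nlinarith
  exact ⟨key, fun x hx => Or.inl (key x hx)⟩
end
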